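/- Let h > 0 and ε > 0, and suppose M_Tᵀ · M_T is invertible. On a probability space, let ξ_0, …, ξ_{n−1} be independent square-integrable real random variables, each with mean 0 and variance 2h²/ε² (the variance of a Laplace distribution with scale h/ε). Let P = M_T · (M_Tᵀ · M_T)⁻¹ · M_Tᵀ. Then E[Σ_{i} ξ_i²] = 2n h²/ε², and E[‖(I − P) · ξ‖²] = 2(n − n₁) h²/ε², where ‖·‖ is the Euclidean norm on ℝⁿ and n − n₁ is the number of leaves of the tree. -/

import Mathlib

open Matrix Finset MeasureTheory ProbabilityTheory

lemma aux_integral_sq_sum {n : ℕ} {Ω : Type*} [MeasurableSpace Ω] {μ : Measure Ω}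
    [IsProbabilityMeasure μ] {ξ : Fin n → Ω → ℝ} {σ2 : ℝ}
    (hindep : iIndepFun ξ μ)
    (hL2 : ∀ i, MemLp (ξ i) 2 μ)
    (hmean : ∀ i, ∫ ω, ξ i ω ∂μ = 0)
    (hvar : ∀ i, ∫ ω, (ξ i ω) ^ 2 ∂μ = σ2)
    (a : Fin n → ℝ) :
    ∫ ω, (∑ i, a i * ξ i ω) ^ 2 ∂μ = (∑ i, a i ^ 2) * σ2 := by
  have hmul : ∀ i k : Fin n, Integrable (fun ω => ξ i ω * ξ k ω) μ := by
    intro i k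
    have h1 : MemLp (ξ i • ξ k) 1 μ :=
      (hL2 k).smul (hL2 i)
    exact memLp_one_iff_integrable.mp h1
  have hcov : ∀ i k : Fin n, i ≠ k → ∫ ω, ξ i ω * ξ k ω ∂μ = 0 := by
    intro i k hik
    have := (hindep.indepFun hik).integral_mul_eq_mul_integral (hL2 i).aestronglyMeasurable
      (hL2 k).aestronglyMeasurable
    simpa [hmean i, hmean k] using this
  have hsq : ∀ ω, (∑ i, a i * ξ i ω) ^ 2 =
      ∑ i, ∑ k, (a i * a k) * (ξ i ω * ξ k ω) := by
    intro ω
    rw [sq, Finset.sum_mul_sum]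
    congr 1; ext i; congr 1; ext k; ring
  simp_rw [hsq]
  rw [integral_finset_sum _ (fun i _ => integrable_finset_sum _
    (fun k _ => ((hmul i k).const_mul _)))]
  have : ∀ i : Fin n, (∫ ω, ∑ k, (a i * a k) * (ξ i ω * ξ k ω) ∂μ) = a i ^ 2 * σ2 := by
    intro i
    rw [integral_finset_sum _ (fun k _ => ((hmul i k).const_mul _))]
    have hterm : ∀ k : Fin n, (∫ ω, (a i * a k) * (ξ i ω * ξ k ω) ∂μ) =
        if k = i then a i ^ 2 * σ2 else 0 := by
      intro k
      rw [MeasureTheory.integral_const_mul]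
      by_cases hk : k = i
      · subst hk; simp [← sq, hvar k]
      · rw [hcov i k (Ne.symm hk)]; simp [hk]
    simp [hterm]
  rw [Finset.sum_congr rfl (fun i _ => this i), ← Finset.sum_mul]

theorem gmc_mean_square_error (n n₁ : ℕ) [NeZero n]
    (f : Fin n → Fin n) (hf0 : f 0 = 0) (hf : ∀ i : Fin n, i ≠ 0 → f i < i)
    (hn₁ : 1 ≤ n₁) (hn₁n : n₁ < n)
    (hleaf : ∀ i : Fin n, (∃ j : Fin n, j ≠ 0 ∧ f j = i) ↔ (i : ℕ) < n₁)
    (M : Matrix (Fin n) (Fin n₁) ℝ)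
    (hM : ∀ (i : Fin n) (j : Fin n₁), M i j =
      if (i : ℕ) = (j : ℕ) then 1
      else if i ≠ 0 ∧ (j : ℕ) = (f i : ℕ) then -1 else 0)
    (hInv : IsUnit (Mᵀ * M).det)
    (h ε : ℝ) (hh : 0 < h) (hε : 0 < ε)
    (Ω : Type*) [MeasurableSpace Ω] (μ : Measure Ω) [IsProbabilityMeasure μ]
    (ξ : Fin n → Ω → ℝ)
    (hindep : iIndepFun ξ μ)
    (hL2 : ∀ i, MemLp (ξ i) 2 μ)
    (hmean : ∀ i, ∫ ω, ξ i ω ∂μ = 0)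
    (hvar : ∀ i, ∫ ω, (ξ i ω) ^ 2 ∂μ = 2 * h ^ 2 / ε ^ 2)
    (P : Matrix (Fin n) (Fin n) ℝ) (hP : P = M * (Mᵀ * M)⁻¹ * Mᵀ) :
    (∫ ω, (∑ i, (ξ i ω) ^ 2) ∂μ) = 2 * n * h ^ 2 / ε ^ 2 ∧
    (∫ ω, (∑ j, ((1 - P).mulVec (fun i => ξ i ω) j) ^ 2) ∂μ) =
      2 * ((n - n₁ : ℕ) : ℝ) * h ^ 2 / ε ^ 2 := by
  set σ2 : ℝ := 2 * h ^ 2 / ε ^ 2 with hσ2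
  constructor
  · rw [integral_finset_sum _ (fun i _ => (hL2 i).integrable_sq)]
    simp [hvar, Finset.sum_const]
    ring
  · -- matrix facts
    have hBsymm : ((Mᵀ * M)⁻¹)ᵀ = (Mᵀ * M)⁻¹ := by
      rw [Matrix.transpose_nonsing_inv, Matrix.transpose_mul, Matrix.transpose_transpose]
    have hPsymm : Pᵀ = P := by
      rw [hP, Matrix.transpose_mul, Matrix.transpose_mul, Matrix.transpose_transpose,
        hBsymm, Matrix.mul_assoc]
    have hPP : P * P = P := by
      rw [hP]
      rw [Matrix.mul_assoc (M * (Mᵀ * M)⁻¹) Mᵀ (M * (Mᵀ * M)⁻¹ * Mᵀ)]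
      rw [show Mᵀ * (M * (Mᵀ * M)⁻¹ * Mᵀ) = (Mᵀ * M) * ((Mᵀ * M)⁻¹ * Mᵀ) by
        rw [Matrix.mul_assoc, ← Matrix.mul_assoc Mᵀ M _, Matrix.mul_assoc]]
      rw [Matrix.mul_nonsing_inv_cancel_left _ _ hInv, Matrix.mul_assoc]
    have htrP : P.trace = (n₁ : ℝ) := by
      rw [hP, Matrix.trace_mul_comm, ← Matrix.mul_assoc,
        Matrix.mul_nonsing_inv _ hInv, Matrix.trace_one]
      simp
    set A : Matrix (Fin n) (Fin n) ℝ := 1 - P with hA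
    have hAsymm : Aᵀ = A := by rw [hA, Matrix.transpose_sub, Matrix.transpose_one, hPsymm]
    have hAA : A * A = A := by
      rw [hA]
      simp [Matrix.sub_mul, Matrix.mul_sub, hPP]
    have hsum : ∑ j, ∑ i, (A j i) ^ 2 = ((n : ℝ) - n₁) := by
      have : ∑ j, ∑ i, (A j i) ^ 2 = (A * Aᵀ).trace := by
        simp [Matrix.trace, Matrix.mul_apply, Matrix.diag, sq, Matrix.transpose_apply]
      rw [this, hAsymm, hAA, hA, Matrix.trace_sub, htrP, Matrix.trace_one]
      simp
    have hrw : ∀ ω, (∑ j, ((1 - P).mulVec (fun i => ξ i ω) j) ^ 2) =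
        ∑ j, (∑ i, A j i * ξ i ω) ^ 2 := by
      intro ω
      simp [Matrix.mulVec, dotProduct, hA]
    rw [MeasureTheory.integral_congr_ae (Filter.Eventually.of_forall hrw)]
    have hint : ∀ j : Fin n, Integrable (fun ω => (∑ i, A j i * ξ i ω) ^ 2) μ := by
      intro j
      have hm : MemLp (fun ω => ∑ i, A j i * ξ i ω) 2 μ := by
        exact memLp_finset_sum _ (fun i _ => (hL2 i).const_mul _)
      exact hm.integrable_sq
    rw [integral_finset_sum _ (fun j _ => hint j)]
    have := fun j : Fin n => aux_integral_sq_sum hindep hL2 hmean hvar (A j)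
    rw [Finset.sum_congr rfl (fun j _ => this j), ← Finset.sum_mul, hsum]
    rw [Nat.cast_sub (le_of_lt hn₁n)]
    ring
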